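/- Let 1 < θ ≤ p < ∞ and 1 < q < ∞ with conjugate exponents p', q'. Let {t_k}_{k∈ℤ} be a p-admissible weight sequence satisfying M_{Q,p}(t_k)·M_{Q,θ(p/θ)'}(t_k^{-1}) ≤ C for all cubes Q and all k. Then for every λ ∈ ḟ_{p',q'}({t_k^{-1}}), the pairing l_λ(s) = Σ_{k∈ℤ} Σ_{m∈ℤⁿ} s_{k,m} conj(λ_{k,m}) converges absolutely for all s ∈ ḟ_{p,q}({t_k}) and satisfies |l_λ(s)| ≤ ‖s|ḟ_{p,q}({t_k})‖ · ‖λ|ḟ_{p',q'}({t_k^{-1}})‖. -/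

import Mathlib

open MeasureTheory ENNReal

noncomputable section

/-- The axis-parallel cube in `ℝⁿ` with lower corner `x` and side length `r`. -/
def cube {n : ℕ} (x : Fin n → ℝ) (r : ℝ) : Set (Fin n → ℝ) :=
  Set.Icc x (fun i => x i + r)

/-- `M_A(f)`: the average of `f` over `A` (an extended nonnegative real). -/
def avg {n : ℕ} (A : Set (Fin n → ℝ)) (f : (Fin n → ℝ) → ℝ) : ℝ≥0∞ :=
  (volume A)⁻¹ * ∫⁻ y in A, ENNReal.ofReal (f y)

/-- `M_{A,r}(f)`: the `r`-th power mean of `|f|` over `A`. -/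
def avgP {n : ℕ} (A : Set (Fin n → ℝ)) (r : ℝ) (f : (Fin n → ℝ) → ℝ) : ℝ≥0∞ :=
  (avg A fun y => |f y| ^ r) ^ (1 / r)

/-- The conjugate exponent `p' = p/(p-1)`. -/
def conjExp (p : ℝ) : ℝ := p / (p - 1)

/-- A weight: a locally integrable function which is a.e. positive. -/
def IsWeight {n : ℕ} (γ : (Fin n → ℝ) → ℝ) : Prop :=
  LocallyIntegrable γ volume ∧ ∀ᵐ x ∂(volume : Measure (Fin n → ℝ)), 0 < γ x

/-- The `A_p` inequality `M_Q(γ) · M_{Q,p'/p}(γ⁻¹) ≤ C` over all cubes. -/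
def ApBound {n : ℕ} (p C : ℝ) (γ : (Fin n → ℝ) → ℝ) : Prop :=
  ∀ (x : Fin n → ℝ) (r : ℝ), 0 < r →
    avg (cube x r) γ * avgP (cube x r) (conjExp p / p) (fun y => (γ y)⁻¹)
      ≤ ENNReal.ofReal C

/-- The Muckenhoupt class `A_p`, `1 < p < ∞`. -/
def IsAp {n : ℕ} (p : ℝ) (γ : (Fin n → ℝ) → ℝ) : Prop :=
  ∃ C : ℝ, 0 < C ∧ ApBound p C γ

/-- The dyadic cube `Q_{k,m} = 2^{-k}([0,1)^n + m)`. -/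
def dyadic (n : ℕ) (k : ℤ) (m : Fin n → ℤ) : Set (Fin n → ℝ) :=
  {y | ∀ i, (m i : ℝ) * (2 : ℝ) ^ (-k) ≤ y i ∧ y i < ((m i : ℝ) + 1) * (2 : ℝ) ^ (-k)}

/-- The (extended nonnegative) absolute values of a complex sequence. -/
def cabs {n : ℕ} (lam : ℤ → (Fin n → ℤ) → ℂ) : ℤ → (Fin n → ℤ) → ℝ≥0∞ :=
  fun k m => ENNReal.ofReal ‖lam k m‖

/-- The function `Σ_{k ≥ kP} Σ_m 2^{knq/2} |t_k(x)|^q a_{k,m}^q χ_{E_{k,m}}(x)`. -/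
def seqBody {n : ℕ} (q : ℝ) (t : ℤ → (Fin n → ℝ) → ℝ)
    (E : ℤ → (Fin n → ℤ) → Set (Fin n → ℝ)) (a : ℤ → (Fin n → ℤ) → ℝ≥0∞)
    (kP : ℤ) (x : Fin n → ℝ) : ℝ≥0∞ :=
  ∑' (k : ℤ), ∑' (m : Fin n → ℤ),
    if kP ≤ k then
      (E k m).indicator
        (fun _ => ENNReal.ofReal ((2 : ℝ) ^ ((k : ℝ) * (n : ℝ) * q / 2) * |t k x| ^ q)
          * a k m ^ q) x
    else 0

/-- The `ḟ_{∞,q}` quasi-norm, with the indicator of `Q_{k,m}` replaced by the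
indicator of a set `E_{k,m}`. -/
def fInfNormE {n : ℕ} (q : ℝ) (t : ℤ → (Fin n → ℝ) → ℝ)
    (E : ℤ → (Fin n → ℤ) → Set (Fin n → ℝ)) (a : ℤ → (Fin n → ℤ) → ℝ≥0∞) : ℝ≥0∞ :=
  ⨆ (kP : ℤ) (mP : Fin n → ℤ),
    ((volume (dyadic n kP mP))⁻¹ *
      ∫⁻ x in dyadic n kP mP, seqBody q t E a kP x) ^ (1 / q)

/-- The `ḟ_{∞,q}(ℝⁿ,{t_k})` quasi-norm of a sequence of coefficient magnitudes. -/
def fInfNorm {n : ℕ} (q : ℝ) (t : ℤ → (Fin n → ℝ) → ℝ)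
    (a : ℤ → (Fin n → ℤ) → ℝ≥0∞) : ℝ≥0∞ :=
  fInfNormE q t (dyadic n) a

/-- `Σ_k Σ_m 2^{knq/2} |t_k(x)|^q a_{k,m}^q χ_{Q_{k,m}}(x)` (sum over all `k ∈ ℤ`). -/
def fpqBody {n : ℕ} (q : ℝ) (t : ℤ → (Fin n → ℝ) → ℝ)
    (a : ℤ → (Fin n → ℤ) → ℝ≥0∞) (x : Fin n → ℝ) : ℝ≥0∞ :=
  ∑' (k : ℤ), ∑' (m : Fin n → ℤ),
    (dyadic n k m).indicator
      (fun _ => ENNReal.ofReal ((2 : ℝ) ^ ((k : ℝ) * (n : ℝ) * q / 2) * |t k x| ^ q)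
        * a k m ^ q) x

/-- The `ḟ_{p,q}(ℝⁿ,{t_k})` quasi-norm of a sequence of coefficient magnitudes. -/
def fpqNorm {n : ℕ} (p q : ℝ) (t : ℤ → (Fin n → ℝ) → ℝ)
    (a : ℤ → (Fin n → ℤ) → ℝ≥0∞) : ℝ≥0∞ :=
  (∫⁻ x, fpqBody q t a x ^ (p / q)) ^ (1 / p)


/-! ### Auxiliary lemmas -/

lemma tsum_inner_le_Lp_mul_Lq {ι : Type*} (f g : ι → ℝ≥0∞) {p q : ℝ}
    (hpq : Real.HolderConjugate p q) :
    ∑' i, f i * g i ≤ (∑' i, f i ^ p) ^ (1 / p) * (∑' i, g i ^ q) ^ (1 / q) := by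
  rw [ENNReal.tsum_eq_iSup_sum]
  refine iSup_le fun s => (ENNReal.inner_le_Lp_mul_Lq (s := s) f g hpq).trans ?_
  exact mul_le_mul' (ENNReal.rpow_le_rpow (ENNReal.sum_le_tsum s) hpq.one_div_nonneg)
    (ENNReal.rpow_le_rpow (ENNReal.sum_le_tsum s) hpq.symm.one_div_nonneg)

lemma dyadic_eq_pi (n : ℕ) (k : ℤ) (m : Fin n → ℤ) :
    dyadic n k m = Set.pi Set.univ
      (fun i => Set.Ico ((m i : ℝ) * (2:ℝ) ^ (-k)) (((m i : ℝ) + 1) * (2:ℝ) ^ (-k))) := by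
  ext y; simp [dyadic, Set.mem_pi]

lemma measurableSet_dyadic (n : ℕ) (k : ℤ) (m : Fin n → ℤ) :
    MeasurableSet (dyadic n k m) := by
  rw [dyadic_eq_pi]; exact MeasurableSet.univ_pi fun i => measurableSet_Ico

lemma volume_dyadic (n : ℕ) (k : ℤ) (m : Fin n → ℤ) :
    volume (dyadic n k m) = ENNReal.ofReal ((2:ℝ) ^ (-k : ℤ)) ^ n := by
  rw [dyadic_eq_pi, volume_pi_pi]
  simp only [Real.volume_Ico, zpow_neg]
  rw [Finset.prod_congr rfl fun i _ => by
    rw [show ((m i:ℝ)+1) * ((2:ℝ)^k)⁻¹ - (m i:ℝ) * ((2:ℝ)^k)⁻¹ = ((2:ℝ)^k)⁻¹ from by ring]]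
  simp [Finset.prod_const]

lemma dyadic_scaled_volume (n : ℕ) (k : ℤ) (m : Fin n → ℤ) :
    ENNReal.ofReal ((2:ℝ) ^ ((k:ℝ) * (n:ℝ))) * volume (dyadic n k m) = 1 := by
  rw [volume_dyadic, ← ENNReal.ofReal_pow (by positivity), ← ENNReal.ofReal_mul (by positivity)]
  rw [show ((2:ℝ) ^ ((k:ℝ) * (n:ℝ))) = (2:ℝ) ^ ((k * n : ℤ)) by
    rw [← Real.rpow_intCast]; push_cast; ring_nf]
  rw [← zpow_natCast ((2:ℝ) ^ (-k)), ← zpow_mul, ← zpow_add₀ (two_ne_zero)]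
  norm_num

/-- The localized elementary pieces used in the Hölder argument. -/
def Ufn {n : ℕ} (t : ℤ → (Fin n → ℝ) → ℝ) (c : ℤ → (Fin n → ℤ) → ℂ)
    (km : ℤ × (Fin n → ℤ)) (x : Fin n → ℝ) : ℝ≥0∞ :=
  (dyadic n km.1 km.2).indicator
    (fun _ => ENNReal.ofReal ((2:ℝ) ^ ((km.1:ℝ) * (n:ℝ) / 2) * |t km.1 x|)
      * cabs c km.1 km.2) x

lemma Ufn_aemeasurable {n : ℕ} {t : ℤ → (Fin n → ℝ) → ℝ}
    (hmeas : ∀ k, AEMeasurable (t k) volume) (c : ℤ → (Fin n → ℤ) → ℂ)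
    (km : ℤ × (Fin n → ℤ)) : AEMeasurable (Ufn t c km) volume := by
  refine AEMeasurable.indicator ?_ (measurableSet_dyadic n km.1 km.2)
  exact (((continuous_abs.measurable.comp_aemeasurable (hmeas km.1)).const_mul
    _).ennreal_ofReal).mul_const _

lemma tsum_Ufn_rpow {n : ℕ} {q : ℝ} (hq0 : 0 < q) (t : ℤ → (Fin n → ℝ) → ℝ)
    (c : ℤ → (Fin n → ℤ) → ℂ) (x : Fin n → ℝ) :
    ∑' km : ℤ × (Fin n → ℤ), Ufn t c km x ^ q = fpqBody q t (cabs c) x := by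
  rw [ENNReal.tsum_prod']
  unfold fpqBody
  refine tsum_congr fun k => tsum_congr fun m => ?_
  by_cases hx : x ∈ dyadic n k m
  · simp only [Ufn, Set.indicator_of_mem hx]
    rw [ENNReal.mul_rpow_of_nonneg _ _ hq0.le,
      ENNReal.ofReal_rpow_of_nonneg (by positivity) hq0.le,
      Real.mul_rpow (by positivity) (abs_nonneg _), ← Real.rpow_mul (by norm_num),
      show (k:ℝ) * (n:ℝ) / 2 * q = (k:ℝ) * (n:ℝ) * q / 2 from by ring]
  · simp [Ufn, Set.indicator_of_notMem hx, ENNReal.zero_rpow_of_pos hq0]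

lemma fpqBody_aemeasurable {n : ℕ} {t : ℤ → (Fin n → ℝ) → ℝ}
    (hmeas : ∀ k, AEMeasurable (t k) volume) (q : ℝ) (a : ℤ → (Fin n → ℤ) → ℝ≥0∞) :
    AEMeasurable (fpqBody q t a) volume := by
  unfold fpqBody
  refine AEMeasurable.ennreal_tsum fun k => AEMeasurable.ennreal_tsum fun m => ?_
  refine AEMeasurable.indicator ?_ (measurableSet_dyadic n k m)
  exact ((((continuous_abs.measurable.comp_aemeasurable (hmeas k)).pow_const
    q).const_mul _).ennreal_ofReal).mul_const _

/-- Hölder pairing bound: for `λ ∈ ḟ_{p',q'}({t_k⁻¹})` and `s ∈ ḟ_{p,q}({t_k})`,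
the pairing converges absolutely and `|l_λ(s)| ≤ ‖s‖·‖λ‖`. -/
theorem pairing_bound {n : ℕ} (θ p q C : ℝ) (hθ : 1 < θ) (hθp : θ ≤ p)
    (hq : 1 < q) (hC : 0 < C) (t : ℤ → (Fin n → ℝ) → ℝ)
    (hw : ∀ k, IsWeight (t k))
    (hadm : ∀ k, LocallyIntegrable (fun y => |t k y| ^ p) volume)
    (hcond : ∀ (k : ℤ) (x : Fin n → ℝ) (ρ : ℝ), 0 < ρ →
      avgP (cube x ρ) p (t k) *
          avgP (cube x ρ) (θ * conjExp (p / θ)) (fun y => (t k y)⁻¹)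
        ≤ ENNReal.ofReal C)
    (lam s : ℤ → (Fin n → ℤ) → ℂ)
    (hlam : fpqNorm (conjExp p) (conjExp q) (fun k y => (t k y)⁻¹) (cabs lam) < ⊤)
    (hs : fpqNorm p q t (cabs s) < ⊤) :
    Summable (fun km : ℤ × (Fin n → ℤ) =>
      ‖s km.1 km.2 * (starRingEnd ℂ) (lam km.1 km.2)‖) ∧
    ENNReal.ofReal (∑' km : ℤ × (Fin n → ℤ),
        ‖s km.1 km.2 * (starRingEnd ℂ) (lam km.1 km.2)‖)
      ≤ fpqNorm p q t (cabs s) *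
        fpqNorm (conjExp p) (conjExp q) (fun k y => (t k y)⁻¹) (cabs lam) := by
  have hp : 1 < p := lt_of_lt_of_le hθ hθp
  have hp0 : (0:ℝ) < p := lt_trans one_pos hp
  have hq0 : (0:ℝ) < q := lt_trans one_pos hq
  have hpne : p ≠ 0 := ne_of_gt hp0
  have hqne : q ≠ 0 := ne_of_gt hq0
  have hp1 : p - 1 ≠ 0 := sub_ne_zero.mpr (ne_of_gt hp)
  have hq1 : q - 1 ≠ 0 := sub_ne_zero.mpr (ne_of_gt hq)
  have hpq : Real.HolderConjugate p (conjExp p) := by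
    rw [Real.holderConjugate_iff]
    refine ⟨hp, ?_⟩
    rw [show conjExp p = p / (p - 1) from rfl, inv_div]
    field_simp
    ring
  have hqq : Real.HolderConjugate q (conjExp q) := by
    rw [Real.holderConjugate_iff]
    refine ⟨hq, ?_⟩
    rw [show conjExp q = q / (q - 1) from rfl, inv_div]
    field_simp
    ring
  have hmeas : ∀ k, AEMeasurable (t k) volume := fun k =>
    ((hw k).1.aestronglyMeasurable).aemeasurable
  set t' : ℤ → (Fin n → ℝ) → ℝ := fun k y => (t k y)⁻¹ with ht'
  have hmeas' : ∀ k, AEMeasurable (t' k) volume := fun k => (hmeas k).inv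
  -- Step 1: each pairing term is an integral over the dyadic cube
  have key1 : ∀ km : ℤ × (Fin n → ℤ),
      cabs s km.1 km.2 * cabs lam km.1 km.2 = ∫⁻ x, Ufn t s km x * Ufn t' lam km x := by
    rintro ⟨k, m⟩
    set c : ℝ := (2:ℝ) ^ ((k:ℝ) * (n:ℝ) / 2) with hc
    have hUV : ∀ x, Ufn t s (k,m) x * Ufn t' lam (k,m) x
        = (dyadic n k m).indicator (fun y => (cabs s k m * cabs lam k m)
            * (ENNReal.ofReal (c * |t k y|) * ENNReal.ofReal (c * |t' k y|))) x := by
      intro x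
      by_cases hx : x ∈ dyadic n k m
      · simp only [Ufn, Set.indicator_of_mem hx]
        ring
      · simp [Ufn, Set.indicator_of_notMem hx]
    have hAB : (fun x => ENNReal.ofReal (c * |t k x|) * ENNReal.ofReal (c * |t' k x|))
        =ᵐ[(volume : Measure (Fin n → ℝ))]
          (fun _ => ENNReal.ofReal ((2:ℝ) ^ ((k:ℝ) * (n:ℝ)))) := by
      refine (hw k).2.mono fun x hx => ?_
      dsimp only
      rw [← ENNReal.ofReal_mul (by positivity)]
      congr 1
      have h2 : |t k x| * |t k x|⁻¹ = 1 := mul_inv_cancel₀ (abs_ne_zero.mpr (ne_of_gt hx))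
      calc c * |t k x| * (c * |t' k x|) = c * c * (|t k x| * |t k x|⁻¹) := by
            simp only [ht', abs_inv]; ring
        _ = c * c := by rw [h2, mul_one]
        _ = (2:ℝ) ^ ((k:ℝ) * (n:ℝ)) := by
            rw [hc, ← Real.rpow_add two_pos, add_halves]
    calc cabs s k m * cabs lam k m
        = cabs s k m * cabs lam k m *
            (ENNReal.ofReal ((2:ℝ) ^ ((k:ℝ) * (n:ℝ))) * volume (dyadic n k m)) := by
          rw [dyadic_scaled_volume, mul_one]
      _ = cabs s k m * cabs lam k m * ∫⁻ x in dyadic n k m,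
            ENNReal.ofReal (c * |t k x|) * ENNReal.ofReal (c * |t' k x|) := by
          rw [lintegral_congr_ae (ae_restrict_of_ae hAB), setLIntegral_const]
      _ = ∫⁻ x in dyadic n k m, cabs s k m * cabs lam k m *
            (ENNReal.ofReal (c * |t k x|) * ENNReal.ofReal (c * |t' k x|)) := by
          exact (lintegral_const_mul' (cabs s k m * cabs lam k m) _
            (show cabs s k m * cabs lam k m ≠ ⊤ from
              ENNReal.mul_ne_top ENNReal.ofReal_ne_top ENNReal.ofReal_ne_top)).symm
      _ = ∫⁻ x, Ufn t s (k,m) x * Ufn t' lam (k,m) x := by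
          rw [← lintegral_indicator (measurableSet_dyadic n k m)]
          exact (lintegral_congr hUV).symm
  have hUm : ∀ km, AEMeasurable (Ufn t s km) volume := fun km =>
    Ufn_aemeasurable hmeas s km
  have hVm : ∀ km, AEMeasurable (Ufn t' lam km) volume := fun km =>
    Ufn_aemeasurable hmeas' lam km
  -- Step 2: swap the sum and the integral
  have key2 : (∑' km : ℤ × (Fin n → ℤ), cabs s km.1 km.2 * cabs lam km.1 km.2)
      = ∫⁻ x, ∑' km : ℤ × (Fin n → ℤ), Ufn t s km x * Ufn t' lam km x := by
    rw [(lintegral_tsum (f := fun km x => Ufn t s km x * Ufn t' lam km x)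
      fun km => (hUm km).mul (hVm km) :
      ∫⁻ x, ∑' km : ℤ × (Fin n → ℤ), Ufn t s km x * Ufn t' lam km x = _)]
    exact tsum_congr key1
  -- Step 3: pointwise Hölder in the (k, m) variables
  have key3 : ∀ x : Fin n → ℝ,
      (∑' km : ℤ × (Fin n → ℤ), Ufn t s km x * Ufn t' lam km x)
        ≤ fpqBody q t (cabs s) x ^ (1/q)
          * fpqBody (conjExp q) t' (cabs lam) x ^ (1/conjExp q) := by
    intro x
    rw [← tsum_Ufn_rpow hq0 t s x, ← tsum_Ufn_rpow hqq.symm.pos t' lam x]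
    exact tsum_inner_le_Lp_mul_Lq _ _ hqq
  -- Step 4: Hölder in x
  have hF : AEMeasurable (fun x => fpqBody q t (cabs s) x ^ (1/q)) volume :=
    ENNReal.continuous_rpow_const.measurable.comp_aemeasurable
      (fpqBody_aemeasurable hmeas q (cabs s))
  have hG : AEMeasurable (fun x => fpqBody (conjExp q) t' (cabs lam) x ^ (1/conjExp q))
      volume :=
    ENNReal.continuous_rpow_const.measurable.comp_aemeasurable
      (fpqBody_aemeasurable hmeas' (conjExp q) (cabs lam))
  have key5 := ENNReal.lintegral_mul_le_Lp_mul_Lq volume hpq hF hG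
  simp only [Pi.mul_apply, ← ENNReal.rpow_mul] at key5
  rw [show 1/q * p = p/q from by ring,
    show 1/conjExp q * conjExp p = conjExp p / conjExp q from by ring] at key5
  have main : (∑' km : ℤ × (Fin n → ℤ), cabs s km.1 km.2 * cabs lam km.1 km.2)
      ≤ fpqNorm p q t (cabs s) * fpqNorm (conjExp p) (conjExp q) t' (cabs lam) := by
    rw [key2]
    refine le_trans (lintegral_mono fun x => key3 x) ?_
    unfold fpqNorm
    exact key5
  -- Conclusion
  have hterm : ∀ km : ℤ × (Fin n → ℤ),
      ENNReal.ofReal ‖s km.1 km.2 * (starRingEnd ℂ) (lam km.1 km.2)‖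
        = cabs s km.1 km.2 * cabs lam km.1 km.2 := fun km => by
    rw [norm_mul, Complex.norm_conj, ENNReal.ofReal_mul (norm_nonneg _)]; rfl
  have hTtop : (∑' km : ℤ × (Fin n → ℤ), cabs s km.1 km.2 * cabs lam km.1 km.2) ≠ ⊤ :=
    (lt_of_le_of_lt main (ENNReal.mul_lt_top hs hlam)).ne
  have hsum : Summable (fun km : ℤ × (Fin n → ℤ) =>
      ‖s km.1 km.2 * (starRingEnd ℂ) (lam km.1 km.2)‖) := by
    refine Summable.congr (ENNReal.summable_toReal hTtop) fun km => ?_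
    rw [← hterm km, ENNReal.toReal_ofReal (norm_nonneg _)]
  refine ⟨hsum, ?_⟩
  rw [ENNReal.ofReal_tsum_of_nonneg (fun km => norm_nonneg _) hsum]
  calc (∑' km : ℤ × (Fin n → ℤ),
        ENNReal.ofReal ‖s km.1 km.2 * (starRingEnd ℂ) (lam km.1 km.2)‖)
      = ∑' km : ℤ × (Fin n → ℤ), cabs s km.1 km.2 * cabs lam km.1 km.2 :=
        tsum_congr hterm
    _ ≤ _ := main
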